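/- Let φ : T → T be a nonconstant Lipschitz self-map with C_φ bounded on Lip_0(T). Then every eigenvalue μ of C_φ on Lip_0(T) satisfies |μ| ≤ λ_φ. -/

import Mathlib

/-- An infinite, locally finite rooted tree in which every vertex other than
the root has degree greater than 1, together with the parent map. -/
structure LipTree (V : Type*) where
  root : V
  G : SimpleGraph V
  isTree : G.IsTree
  locFin : ∀ v : V, (G.neighborSet v).Finite
  infinite : Infinite V
  deg_gt : ∀ v : V, v ≠ root → 1 < (G.neighborSet v).ncard
  par : V → V
  par_root : par root = root
  adj_par : ∀ v : V, v ≠ root → G.Adj v (par v)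
  dist_par : ∀ v : V, v ≠ root → G.dist (par v) root + 1 = G.dist v root

namespace LipTree

variable {V : Type*}

/-- `|v|`, the distance from `v` to the root. -/
noncomputable def depth (T : LipTree V) (v : V) : ℕ := T.G.dist v T.root

/-- membership in the Lipschitz space `Lip(T)`. -/
def MemLip (T : LipTree V) (f : V → ℂ) : Prop :=
  ∃ C : ℝ, ∀ v : V, v ≠ T.root → ‖f v - f (T.par v)‖ ≤ C

/-- membership in the little Lipschitz space `Lip₀(T)`. -/
def MemLip0 (T : LipTree V) (f : V → ℂ) : Prop :=
  T.MemLip f ∧ ∀ ε : ℝ, 0 < ε → ∃ N : ℕ, ∀ v : V, v ≠ T.root → N ≤ T.depth v →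
    ‖f v - f (T.par v)‖ < ε

/-- the norm `‖f‖_Lip = max {|f(root)|, sup_{v ≠ root} |f(v) - f(v⁻)|}`. -/
noncomputable def normLip (T : LipTree V) (f : V → ℂ) : ℝ :=
  max ‖f T.root‖
    (sSup {r : ℝ | ∃ v : V, v ≠ T.root ∧ r = ‖f v - f (T.par v)‖})

/-- `φ` is a Lipschitz self-map of the tree. -/
noncomputable def LipschitzSelfMap (T : LipTree V) (φ : V → V) : Prop :=
  ∃ C : ℕ, ∀ v : V, v ≠ T.root → T.G.dist (φ v) (φ (T.par v)) ≤ C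

/-- the Lipschitz number `λ_φ`. -/
noncomputable def lipNum (T : LipTree V) (φ : V → V) : ℝ :=
  sSup {r : ℝ | ∃ v : V, v ≠ T.root ∧ r = (T.G.dist (φ v) (φ (T.par v)) : ℝ)}

/-- the composition operator `C_φ` maps `Lip₀` into itself and is bounded there. -/
def BoundedOnLip0 (T : LipTree V) (φ : V → V) : Prop :=
  (∀ f : V → ℂ, T.MemLip0 f → T.MemLip0 (f ∘ φ)) ∧
  ∃ C : ℝ, ∀ f : V → ℂ, T.MemLip0 f → T.normLip (f ∘ φ) ≤ C * T.normLip f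

/-- `u` belongs to the sector `S_v` determined by `v`. -/
def InSector (T : LipTree V) (v u : V) : Prop := ∃ k : ℕ, T.par^[k] u = v

end LipTree


section Aux

variable {V : Type*} {G : SimpleGraph V}

lemma aux_support_depth {r u x : V} (p : G.Walk u r) (hp : p.length = G.dist u r)
    (hx : x ∈ p.support) (hne : x ≠ u) : G.dist x r < G.dist u r := by
  obtain ⟨q, s, rfl⟩ := SimpleGraph.Walk.mem_support_iff_exists_append.mp hx
  have hq : q.length ≠ 0 := fun h => hne (SimpleGraph.Walk.eq_of_length_eq_zero h).symm
  have h1 : G.dist x r ≤ s.length := SimpleGraph.dist_le s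
  have h2 : q.length + s.length = G.dist u r := by
    rw [← hp, SimpleGraph.Walk.length_append]
  omega

lemma aux_adj_to_parent {r : V} (hT : G.IsTree) (par : V → V)
    (hadj : ∀ v : V, v ≠ r → G.Adj v (par v))
    (hdist : ∀ v : V, v ≠ r → G.dist (par v) r + 1 = G.dist v r)
    {x y : V} (h : G.Adj x y) (hlt : G.dist y r < G.dist x r) : y = par x := by
  have hconn := hT.isConnected
  have hx : x ≠ r := by
    intro hxr; subst hxr
    simp [SimpleGraph.dist_self] at hlt
  obtain ⟨py, hpyP, hpyL⟩ := hconn.exists_path_of_dist y r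
  have hxny : x ∉ py.support := by
    intro hmem
    have := aux_support_depth py hpyL hmem h.ne
    omega
  obtain ⟨pp, hppP, hppL⟩ := hconn.exists_path_of_dist (par x) r
  have hxpar : x ≠ par x := by
    intro hh
    have := hadj x hx
    rw [← hh] at this
    exact G.irrefl this
  have hxnp : x ∉ pp.support := by
    intro hmem
    have := aux_support_depth pp hppL hmem hxpar
    have := hdist x hx
    omega
  have hw1 : (SimpleGraph.Walk.cons h py).IsPath := hpyP.cons hxny
  have hw2 : (SimpleGraph.Walk.cons (hadj x hx) pp).IsPath := hppP.cons hxnp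
  have huniq := hT.existsUnique_path x r
  have heq : SimpleGraph.Walk.cons h py = SimpleGraph.Walk.cons (hadj x hx) pp :=
    huniq.unique hw1 hw2
  have := congrArg (fun w => SimpleGraph.Walk.getVert w 1) heq
  simpa using this

lemma aux_adj_depth_ne {r : V} (hT : G.IsTree) {x y : V} (h : G.Adj x y) :
    G.dist x r ≠ G.dist y r := by
  intro hd
  have hconn := hT.isConnected
  have hx : x ≠ r := by
    intro hxr; subst hxr
    have hne : G.dist y x ≠ 0 := fun h0 => h.ne' (hconn.dist_eq_zero_iff.mp h0)
    rw [SimpleGraph.dist_self] at hd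
    exact hne hd.symm
  obtain ⟨px, hpxP, hpxL⟩ := hconn.exists_path_of_dist x r
  have hyns : y ∉ px.support := by
    intro hmem
    have := aux_support_depth px hpxL hmem h.ne'
    omega
  have hw : (SimpleGraph.Walk.cons h.symm px).IsPath := hpxP.cons hyns
  obtain ⟨py, hpyP, hpyL⟩ := hconn.exists_path_of_dist y r
  have heq : SimpleGraph.Walk.cons h.symm px = py := (hT.existsUnique_path y r).unique hw hpyP
  have := congrArg SimpleGraph.Walk.length heq
  simp only [SimpleGraph.Walk.length_cons] at this
  omega

end Aux


namespace LipTree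

variable {V : Type*} (T : LipTree V)

lemma aux_conn : T.G.Connected := T.isTree.isConnected

lemma aux_adj_eq_par {x y : V} (h : T.G.Adj x y) : y = T.par x ∨ x = T.par y := by
  rcases lt_trichotomy (T.G.dist y T.root) (T.G.dist x T.root) with hlt | heq | hgt
  · exact Or.inl (aux_adj_to_parent T.isTree T.par T.adj_par T.dist_par h hlt)
  · exact absurd heq.symm (aux_adj_depth_ne T.isTree h)
  · exact Or.inr (aux_adj_to_parent T.isTree T.par T.adj_par T.dist_par h.symm hgt)

lemma aux_const_of_step {α : Sort*} (g : V → α) (hg : ∀ v, v ≠ T.root → g v = g (T.par v)) :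
    ∀ v : V, g v = g T.root := by
  have key : ∀ n : ℕ, ∀ v : V, T.G.dist v T.root ≤ n → g v = g T.root := by
    intro n
    induction n with
    | zero =>
      intro v hv
      have : v = T.root := T.aux_conn.dist_eq_zero_iff.mp (Nat.le_zero.mp hv)
      rw [this]
    | succ n ih =>
      intro v hv
      by_cases hr : v = T.root
      · rw [hr]
      · have hd := T.dist_par v hr
        rw [hg v hr]
        exact ih (T.par v) (by omega)
  exact fun v => key (T.G.dist v T.root) v le_rfl

lemma aux_adj_diff {f : V → ℂ} {L : ℝ}
    (hL : ∀ v, v ≠ T.root → ‖f v - f (T.par v)‖ ≤ L)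
    {x y : V} (h : T.G.Adj x y) : ‖f x - f y‖ ≤ L := by
  rcases T.aux_adj_eq_par h with rfl | rfl
  · refine hL x ?_
    intro hx
    rw [hx, T.par_root] at h
    exact T.G.irrefl (hx ▸ h)
  · rw [show f (T.par y) - f y = -(f y - f (T.par y)) by ring, norm_neg]
    refine hL y ?_
    intro hy
    rw [hy, T.par_root] at h
    exact T.G.irrefl (hy ▸ h)

lemma aux_dist_diff {f : V → ℂ} {L : ℝ} (hL0 : 0 ≤ L)
    (hL : ∀ v, v ≠ T.root → ‖f v - f (T.par v)‖ ≤ L) (x y : V) :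
    ‖f x - f y‖ ≤ L * T.G.dist x y := by
  have key : ∀ n : ℕ, ∀ x y : V, T.G.dist x y ≤ n →
      ‖f x - f y‖ ≤ L * T.G.dist x y := by
    intro n
    induction n with
    | zero =>
      intro x y hxy
      have : x = y := T.aux_conn.dist_eq_zero_iff.mp (Nat.le_zero.mp hxy)
      subst this
      simp
    | succ n ih =>
      intro x y hxy
      by_cases hc : T.G.dist x y ≤ n
      · exact ih x y hc
      · have hd : T.G.dist x y = n + 1 := by omega
        obtain ⟨p, hp⟩ := T.aux_conn.exists_walk_length_eq_dist x y
        cases p with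
        | nil => rw [SimpleGraph.Walk.length_nil] at hp; omega
        | cons h q =>
          rename_i z
          rw [SimpleGraph.Walk.length_cons] at hp
          have hqn : q.length = n := by omega
          have hzy : T.G.dist z y ≤ n := hqn ▸ SimpleGraph.dist_le q
          calc ‖f x - f y‖
              ≤ ‖f x - f z‖ + ‖f z - f y‖ := by
                simpa using norm_sub_le_norm_sub_add_norm_sub (f x) (f z) (f y)
            _ ≤ L + L * T.G.dist z y := add_le_add (T.aux_adj_diff hL h) (ih z y hzy)
            _ ≤ L + L * n := by
                have : (T.G.dist z y : ℝ) ≤ (n : ℝ) := by exact_mod_cast hzy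
                nlinarith
            _ = L * (n + 1) := by ring
            _ = L * T.G.dist x y := by rw [hd]; push_cast; ring
  exact key (T.G.dist x y) x y le_rfl

end LipTree

/-- For a nonconstant Lipschitz `φ` with `C_φ` bounded on `Lip₀`, every eigenvalue `μ`
of `C_φ` satisfies `|μ| ≤ λ_φ`. -/
theorem point_spectrum_bound {V : Type*} (T : LipTree V) (φ : V → V)
    (hφ : T.LipschitzSelfMap φ) (hnc : ¬ ∃ w : V, ∀ v : V, φ v = w)
    (hbdd : T.BoundedOnLip0 φ) :
    ∀ μ : ℂ, ∀ f : V → ℂ, T.MemLip0 f → f ≠ 0 → f ∘ φ = μ • f →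
      ‖μ‖ ≤ T.lipNum φ := by
  intro μ f hf hf0 heig
  have hconn : T.G.Connected := T.aux_conn
  have hpt : ∀ v : V, f (φ v) = μ * f v := by
    intro v
    have := congrFun heig v
    simpa using this
  obtain ⟨C, hC⟩ := hφ
  have hbddΛ : BddAbove {r : ℝ | ∃ v : V, v ≠ T.root ∧ r = (T.G.dist (φ v) (φ (T.par v)) : ℝ)} := by
    refine ⟨(C : ℝ), ?_⟩
    rintro r ⟨v, hv, rfl⟩
    exact_mod_cast hC v hv
  have : Infinite V := T.infinite
  obtain ⟨v₁, hv₁⟩ := exists_ne T.root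
  have hΛmem : ∀ v, v ≠ T.root → (T.G.dist (φ v) (φ (T.par v)) : ℝ) ≤ T.lipNum φ :=
    fun v hv => le_csSup hbddΛ ⟨v, hv, rfl⟩
  have hΛ0 : 0 ≤ T.lipNum φ := le_trans (by positivity) (hΛmem v₁ hv₁)
  by_cases hA : ∀ v, v ≠ T.root → f v = f (T.par v)
  · -- f is constant, so μ = 1 and λ_φ ≥ 1
    have hconst : ∀ v, f v = f T.root := T.aux_const_of_step f hA
    have hroot : f T.root ≠ 0 := by
      intro h0
      apply hf0
      funext v
      rw [hconst v, h0]
      rfl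
    have hμ : μ = 1 := by
      have h1 := hpt T.root
      rw [hconst (φ T.root)] at h1
      have : μ * f T.root = 1 * f T.root := by rw [one_mul, ← h1]
      exact mul_right_cancel₀ hroot this
    have hex : ∃ v, v ≠ T.root ∧ φ v ≠ φ (T.par v) := by
      by_contra hcon
      push_neg at hcon
      exact hnc ⟨φ T.root, fun v => T.aux_const_of_step φ hcon v⟩
    obtain ⟨v₂, hv₂, hφv₂⟩ := hex
    have h1 : (1:ℝ) ≤ (T.G.dist (φ v₂) (φ (T.par v₂)) : ℝ) := by
      exact_mod_cast hconn.pos_dist_of_ne hφv₂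
    rw [hμ]
    simpa using le_trans h1 (hΛmem v₂ hv₂)
  · push_neg at hA
    obtain ⟨v₀, hv₀, hfv₀⟩ := hA
    obtain ⟨Cf, hCf⟩ := hf.1
    set S : Set ℝ := {r : ℝ | ∃ v, v ≠ T.root ∧ r = ‖f v - f (T.par v)‖} with hS
    have hbddS : BddAbove S := by
      refine ⟨Cf, ?_⟩
      rintro r ⟨v, hv, rfl⟩
      exact hCf v hv
    have hneS : S.Nonempty := ⟨_, v₀, hv₀, rfl⟩
    set L : ℝ := sSup S with hLdef
    have hL : ∀ v, v ≠ T.root → ‖f v - f (T.par v)‖ ≤ L :=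
      fun v hv => le_csSup hbddS ⟨v, hv, rfl⟩
    have hLpos : 0 < L := by
      have h1 : ‖f v₀ - f (T.par v₀)‖ ≤ L := hL v₀ hv₀
      have h2 : 0 < ‖f v₀ - f (T.par v₀)‖ := by
        rw [norm_pos_iff]
        exact sub_ne_zero_of_ne hfv₀
      linarith
    have hkey : ∀ v, v ≠ T.root →
        ‖μ‖ * ‖f v - f (T.par v)‖ ≤ L * T.lipNum φ := by
      intro v hv
      have e1 : ‖f (φ v) - f (φ (T.par v))‖ =
          ‖μ‖ * ‖f v - f (T.par v)‖ := by
        rw [hpt v, hpt (T.par v), ← mul_sub, norm_mul]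
      have e2 : ‖f (φ v) - f (φ (T.par v))‖ ≤
          L * T.G.dist (φ v) (φ (T.par v)) :=
        T.aux_dist_diff hLpos.le hL (φ v) (φ (T.par v))
      have e3 : L * (T.G.dist (φ v) (φ (T.par v)) : ℝ) ≤ L * T.lipNum φ :=
        mul_le_mul_of_nonneg_left (hΛmem v hv) hLpos.le
      rw [← e1]
      exact le_trans e2 e3
    by_cases hμ0 : ‖μ‖ = 0
    · rw [hμ0]; exact hΛ0
    · have hμpos : 0 < ‖μ‖ := lt_of_le_of_ne (norm_nonneg _) (Ne.symm hμ0)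
      have hLle : L ≤ L * T.lipNum φ / ‖μ‖ := by
        apply csSup_le hneS
        rintro r ⟨v, hv, rfl⟩
        rw [le_div_iff₀ hμpos]
        calc ‖f v - f (T.par v)‖ * ‖μ‖
            = ‖μ‖ * ‖f v - f (T.par v)‖ := by ring
          _ ≤ L * T.lipNum φ := hkey v hv
      rw [le_div_iff₀ hμpos] at hLle
      have : ‖μ‖ * L ≤ T.lipNum φ * L := by nlinarith
      exact le_of_mul_le_mul_right (by linarith [this]) hLpos
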